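/- Let (d_w)_{w≥1} be a real sequence, d^u > 0 with |d_w| ≤ d^u for all w ≥ 1, and let D be a positive integer with D − 1 ≤ d^u ≤ D. Let c_0 > 0, c_w := (1/w)·Σ_{r=0}^{w−1} d_{w−r}·c_r for w ≥ 1, and c̃_0 := c_0, c̃_w := (1/w)·Σ_{r=0}^{w−1} d^u·c̃_r for w ≥ 1. Let y > 0 and let w_m be a positive integer with w_m ≥ e^{2/e}·y + D. Then the series Σ_{w=w_m}^{∞} (−1)^w·c_w·y^{w+1}/(w+1)! converges absolutely and |Σ_{w=w_m}^{∞} (−1)^w·c_w·y^{w+1}/(w+1)!| ≤ c̃_{D−1}·(1 + π²/6)·y^{w_m+1}/(w_m + 1 − D)!. -/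

import Mathlib

/-- Tail bound for the truncated power series: with `|d_w| ≤ d^u` for `w ≥ 1`,
`D` a positive integer with `D − 1 ≤ d^u ≤ D`, `c_0 > 0`,
`c_w = (1/w)·Σ_{r=0}^{w−1} d_{w−r}·c_r`, `c̃_0 = c_0`,
`c̃_w = (1/w)·Σ_{r=0}^{w−1} d^u·c̃_r`, `y > 0`, and a positive integer
`w_m ≥ e^{2/e}·y + D`: the series `Σ_{w=w_m}^{∞} (−1)^w·c_w·y^{w+1}/(w+1)!`
converges absolutely and its absolute value is at most
`c̃_{D−1}·(1 + π²/6)·y^{w_m+1}/(w_m + 1 − D)!`. -/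
theorem tail_series_abs_bound
    (d : ℕ → ℝ) (du : ℝ) (hdu : 0 < du) (hdbd : ∀ w : ℕ, 1 ≤ w → |d w| ≤ du)
    (D : ℕ) (hD : 1 ≤ D) (hD1 : (D : ℝ) - 1 ≤ du) (hD2 : du ≤ (D : ℝ))
    (c0 : ℝ) (hc0 : 0 < c0)
    (c ct : ℕ → ℝ) (hcz : c 0 = c0) (hctz : ct 0 = c0)
    (hc : ∀ w : ℕ, 1 ≤ w → c w = (1 / (w : ℝ)) * ∑ r ∈ Finset.range w, d (w - r) * c r)
    (hct : ∀ w : ℕ, 1 ≤ w → ct w = (1 / (w : ℝ)) * ∑ r ∈ Finset.range w, du * ct r)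
    (y : ℝ) (hy : 0 < y)
    (wm : ℕ) (hwm : 1 ≤ wm)
    (hwm2 : Real.exp (2 / Real.exp 1) * y + (D : ℝ) ≤ (wm : ℝ)) :
    Summable (fun w : ℕ =>
      |(-1 : ℝ) ^ (w + wm) * c (w + wm) * y ^ (w + wm + 1) /
        (Nat.factorial (w + wm + 1) : ℝ)|) ∧
    |∑' w : ℕ, (-1 : ℝ) ^ (w + wm) * c (w + wm) * y ^ (w + wm + 1) /
        (Nat.factorial (w + wm + 1) : ℝ)| ≤
      ct (D - 1) * (1 + Real.pi ^ 2 / 6) * y ^ (wm + 1) /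
        (Nat.factorial (wm + 1 - D) : ℝ) := by
  set E : ℝ := Real.exp (2 / Real.exp 1) with hE
  have hEpos : 0 < E := Real.exp_pos _
  have hA1 : (1 : ℝ) ≤ (D : ℝ) := by exact_mod_cast hD
  -- positivity of ct
  have hctpos : ∀ w, 0 < ct w := by
    intro w
    induction w using Nat.strong_induction_on with
    | _ w ih =>
      rcases Nat.eq_zero_or_pos w with h | h
      · subst h; rw [hctz]; exact hc0
      · rw [hct w h]
        have hw : (0 : ℝ) < w := by exact_mod_cast h
        apply mul_pos (one_div_pos.mpr hw)
        apply Finset.sum_pos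
        · intro r hr; exact mul_pos hdu (ih r (Finset.mem_range.mp hr))
        · exact Finset.nonempty_range_iff.mpr (by omega)
  -- |c| ≤ ct
  have habs : ∀ w, |c w| ≤ ct w := by
    intro w
    induction w using Nat.strong_induction_on with
    | _ w ih =>
      rcases Nat.eq_zero_or_pos w with h | h
      · subst h; rw [hcz, hctz, abs_of_pos hc0]
      · have hw : (0 : ℝ) < w := by exact_mod_cast h
        rw [hc w h, hct w h, abs_mul, abs_of_pos (one_div_pos.mpr hw)]
        apply mul_le_mul_of_nonneg_left _ (le_of_lt (one_div_pos.mpr hw))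
        calc |∑ r ∈ Finset.range w, d (w - r) * c r|
            ≤ ∑ r ∈ Finset.range w, |d (w - r) * c r| := Finset.abs_sum_le_sum_abs _ _
          _ ≤ ∑ r ∈ Finset.range w, du * ct r := by
              apply Finset.sum_le_sum
              intro r hr
              rw [abs_mul]
              have hr' := Finset.mem_range.mp hr
              exact mul_le_mul (hdbd _ (by omega)) (ih r hr') (abs_nonneg _) hdu.le
  -- basic sum identity
  have hsum : ∀ w : ℕ, (w : ℝ) * ct w = du * ∑ r ∈ Finset.range w, ct r := by
    intro w
    rcases Nat.eq_zero_or_pos w with h | h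
    · subst h; simp
    · have hw : ((w : ℝ)) ≠ 0 := by
        have : (0 : ℝ) < w := by exact_mod_cast h
        exact this.ne'
      rw [hct w h, ← Finset.mul_sum]
      field_simp
  -- ratio recursion
  have hrec : ∀ w : ℕ, ((w : ℝ) + 1) * ct (w + 1) = ((w : ℝ) + du) * ct w := by
    intro w
    have h1 := hsum (w + 1)
    have h2 := hsum w
    rw [Finset.sum_range_succ, mul_add, ← h2] at h1
    push_cast at h1
    rw [h1]; ring
  -- growth bound: ct (D-1+k) * (k! * D!) ≤ ct (D-1) * (D+k)!
  have claimC : ∀ k : ℕ, ct (D - 1 + k) * ((Nat.factorial k : ℝ) * (Nat.factorial D : ℝ))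
      ≤ ct (D - 1) * ((Nat.factorial (D + k) : ℝ)) := by
    intro k
    induction k with
    | zero => simp
    | succ k IH =>
      have hAk : (0 : ℝ) < (D : ℝ) + k := by positivity
      have hcast : ((D - 1 + k : ℕ) : ℝ) = (D : ℝ) + k - 1 := by
        rw [Nat.cast_add, Nat.cast_sub hD]; push_cast; ring
      have hr := hrec (D - 1 + k)
      have e1 : D - 1 + k + 1 = D + k := by omega
      have e2 : D - 1 + (k + 1) = D + k := by omega
      rw [e1, hcast] at hr
      -- hr : ((D:ℝ)+k-1+1) * ct (D+k) = ((D:ℝ)+k-1+du) * ct (D-1+k)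
      have hP : ((D : ℝ) + k) * ct (D + k) = ((D : ℝ) + k - 1 + du) * ct (D - 1 + k) := by
        rw [← hr]; ring_nf
      rw [e2]
      have hfs : ((Nat.factorial (k + 1) : ℝ)) = ((k : ℝ) + 1) * (Nat.factorial k : ℝ) := by
        rw [Nat.factorial_succ]; push_cast; ring
      have hfs2 : ((Nat.factorial (D + (k + 1)) : ℝ))
          = ((D : ℝ) + k + 1) * (Nat.factorial (D + k) : ℝ) := by
        have : D + (k + 1) = (D + k) + 1 := by omega
        rw [this, Nat.factorial_succ]; push_cast; ring
      rw [hfs, hfs2]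
      rw [← mul_le_mul_iff_of_pos_left hAk]
      have hnn1 : (0 : ℝ) ≤ ((D : ℝ) + k - 1 + du) * ((k : ℝ) + 1) := by
        apply mul_nonneg _ (by positivity)
        nlinarith
      calc ((D : ℝ) + k) * (ct (D + k) * (((k : ℝ) + 1) * (Nat.factorial k : ℝ) * (Nat.factorial D : ℝ)))
          = (((D : ℝ) + k) * ct (D + k)) * (((k : ℝ) + 1) * (Nat.factorial k : ℝ) * (Nat.factorial D : ℝ)) := by ring
        _ = (((D : ℝ) + k - 1 + du) * ((k : ℝ) + 1)) * (ct (D - 1 + k) * ((Nat.factorial k : ℝ) * (Nat.factorial D : ℝ))) := by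
            rw [hP]; ring
        _ ≤ (((D : ℝ) + k - 1 + du) * ((k : ℝ) + 1)) * (ct (D - 1) * (Nat.factorial (D + k) : ℝ)) := by
            exact mul_le_mul_of_nonneg_left IH hnn1
        _ ≤ (((D : ℝ) + k) * ((D : ℝ) + k + 1)) * (ct (D - 1) * (Nat.factorial (D + k) : ℝ)) := by
            apply mul_le_mul_of_nonneg_right _ (mul_nonneg (hctpos _).le (by positivity))
            nlinarith [sq_nonneg ((D : ℝ) - 1)]
        _ = ((D : ℝ) + k) * (ct (D - 1) * (((D : ℝ) + k + 1) * (Nat.factorial (D + k) : ℝ))) := by ring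
  -- wm > D
  have hDwm : D < wm := by
    have h0 : (0:ℝ) < E * y := mul_pos hEpos hy
    have : (D : ℝ) < (wm : ℝ) := by linarith
    exact_mod_cast this
  set N : ℕ := wm + 1 - D with hN
  have hNcast : ((N : ℕ) : ℝ) = (wm : ℝ) + 1 - (D : ℝ) := by
    rw [hN, Nat.cast_sub (by omega)]; push_cast; ring
  have hEyle : E * y ≤ (wm : ℝ) - (D : ℝ) := by linarith
  -- claimB : (E*y)^k * N! ≤ (N+k)!
  have claimB : ∀ k : ℕ, (E * y) ^ k * ((Nat.factorial N : ℝ)) ≤ ((Nat.factorial (N + k) : ℝ)) := by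
    intro k
    induction k with
    | zero => simp
    | succ k IH =>
      have hEy : (0:ℝ) ≤ E * y := (mul_pos hEpos hy).le
      have hle : E * y ≤ ((N + k : ℕ) : ℝ) + 1 := by
        push_cast
        rw [hNcast] at *
        linarith [Nat.cast_nonneg (α := ℝ) k, hNcast]
      calc (E * y) ^ (k + 1) * (Nat.factorial N : ℝ)
          = (E * y) * ((E * y) ^ k * (Nat.factorial N : ℝ)) := by ring
        _ ≤ (E * y) * (Nat.factorial (N + k) : ℝ) := by
            exact mul_le_mul_of_nonneg_left IH hEy
        _ ≤ (((N + k : ℕ) : ℝ) + 1) * (Nat.factorial (N + k) : ℝ) := by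
            exact mul_le_mul_of_nonneg_right hle (by positivity)
        _ = ((Nat.factorial (N + (k + 1)) : ℝ)) := by
            have : N + (k + 1) = (N + k) + 1 := by omega
            rw [this, Nat.factorial_succ]; push_cast; ring
  -- k^2 ≤ E^k for k ≥ 1
  have hk2 : ∀ k : ℕ, 1 ≤ k → ((k : ℝ)) ^ 2 ≤ E ^ k := by
    intro k hk
    have hkpos : (0:ℝ) < k := by exact_mod_cast hk
    have he : (0:ℝ) < Real.exp 1 := Real.exp_pos 1
    have hlog : Real.log k ≤ (k : ℝ) / Real.exp 1 := by
      have h := Real.log_le_sub_one_of_pos (x := (k : ℝ) / Real.exp 1) (by positivity)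
      rw [Real.log_div hkpos.ne' (Real.exp_ne_zero 1), Real.log_exp] at h
      linarith
    have h1 : ((k : ℝ)) ^ 2 = Real.exp (Real.log k + Real.log k) := by
      rw [Real.exp_add, Real.exp_log hkpos]; ring
    have h2 : Real.exp ((k : ℕ) * (2 / Real.exp 1)) = E ^ k := by
      rw [Real.exp_nat_mul]
    rw [h1, ← h2]
    apply Real.exp_le_exp.mpr
    have : ((k : ℕ) : ℝ) * (2 / Real.exp 1) = 2 * ((k : ℝ) / Real.exp 1) := by ring
    rw [this]
    linarith
  -- s and M
  set s : ℕ → ℝ := fun k => if k = 0 then 1 else 1 / (k : ℝ) ^ 2 with hs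
  set M : ℝ := ct (D - 1) * y ^ (wm + 1) / ((Nat.factorial N : ℝ)) with hM
  have hMpos : 0 < M := by
    apply div_pos (mul_pos (hctpos _) (pow_pos hy _)) (by positivity)
  -- per-term bound
  have hterm : ∀ k : ℕ,
      |(-1 : ℝ) ^ (k + wm) * c (k + wm) * y ^ (k + wm + 1) / (Nat.factorial (k + wm + 1) : ℝ)|
        ≤ M * s k := by
    intro k
    have hfacpos : (0:ℝ) < (Nat.factorial (k + wm + 1) : ℝ) := by positivity
    have habs1 : |(-1 : ℝ) ^ (k + wm) * c (k + wm) * y ^ (k + wm + 1) / (Nat.factorial (k + wm + 1) : ℝ)|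
        = |c (k + wm)| * y ^ (k + wm + 1) / (Nat.factorial (k + wm + 1) : ℝ) := by
      rw [abs_div, abs_mul, abs_mul, abs_pow, abs_neg, abs_one, one_pow, one_mul,
        abs_of_pos (pow_pos hy _), abs_of_pos hfacpos]
    rw [habs1]
    -- ct bound for index k+wm
    have hidx1 : D - 1 + (N + k) = k + wm := by omega
    have hidx2 : D + (N + k) = k + wm + 1 := by omega
    have hCC := claimC (N + k)
    rw [hidx1, hidx2] at hCC
    have hfacD : (1:ℝ) ≤ (Nat.factorial D : ℝ) := by exact_mod_cast Nat.one_le_iff_ne_zero.mpr (Nat.factorial_ne_zero D)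
    have hct1 : ct (k + wm) * ((Nat.factorial (N + k) : ℝ)) ≤ ct (D - 1) * (Nat.factorial (k + wm + 1) : ℝ) := by
      calc ct (k + wm) * ((Nat.factorial (N + k) : ℝ))
          ≤ ct (k + wm) * ((Nat.factorial (N + k) : ℝ) * (Nat.factorial D : ℝ)) := by
            rw [← mul_assoc]
            exact le_mul_of_one_le_right (mul_nonneg (hctpos _).le (by positivity)) hfacD
        _ ≤ ct (D - 1) * (Nat.factorial (k + wm + 1) : ℝ) := hCC
    have hNkpos : (0:ℝ) < (Nat.factorial (N + k) : ℝ) := by positivity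
    have step1 : |c (k + wm)| * y ^ (k + wm + 1) / (Nat.factorial (k + wm + 1) : ℝ)
        ≤ ct (D - 1) * y ^ (k + wm + 1) / (Nat.factorial (N + k) : ℝ) := by
      rw [div_le_div_iff₀ hfacpos hNkpos]
      have h1 : |c (k + wm)| * y ^ (k + wm + 1) ≤ ct (k + wm) * y ^ (k + wm + 1) :=
        mul_le_mul_of_nonneg_right (habs _) (pow_pos hy _).le
      calc |c (k + wm)| * y ^ (k + wm + 1) * (Nat.factorial (N + k) : ℝ)
          ≤ ct (k + wm) * y ^ (k + wm + 1) * (Nat.factorial (N + k) : ℝ) :=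
            mul_le_mul_of_nonneg_right h1 hNkpos.le
        _ = ct (k + wm) * (Nat.factorial (N + k) : ℝ) * y ^ (k + wm + 1) := by ring
        _ ≤ ct (D - 1) * (Nat.factorial (k + wm + 1) : ℝ) * y ^ (k + wm + 1) :=
            mul_le_mul_of_nonneg_right hct1 (pow_pos hy _).le
        _ = ct (D - 1) * y ^ (k + wm + 1) * (Nat.factorial (k + wm + 1) : ℝ) := by ring
    refine step1.trans ?_
    have hpowsplit : y ^ (k + wm + 1) = y ^ k * y ^ (wm + 1) := by
      rw [← pow_add]; ring_nf
    rcases Nat.eq_zero_or_pos k with hk0 | hk1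
    · subst hk0
      simp only [hs, if_pos rfl, mul_one, hM]
      simp [hpowsplit]
    · have hkR : (0:ℝ) < (k:ℝ) := by exact_mod_cast hk1
      have hkey : ((k : ℝ)) ^ 2 * y ^ k * (Nat.factorial N : ℝ) ≤ ((Nat.factorial (N + k) : ℝ)) := by
        calc ((k : ℝ)) ^ 2 * y ^ k * (Nat.factorial N : ℝ)
            ≤ E ^ k * y ^ k * (Nat.factorial N : ℝ) := by
              apply mul_le_mul_of_nonneg_right (mul_le_mul_of_nonneg_right (hk2 k hk1) (pow_pos hy _).le) (by positivity)
          _ = (E * y) ^ k * (Nat.factorial N : ℝ) := by rw [mul_pow]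
          _ ≤ ((Nat.factorial (N + k) : ℝ)) := claimB k
      have hk0 : k ≠ 0 := by omega
      have hsk : s k = 1 / (k : ℝ) ^ 2 := by
        simp [hs, hk0]
      rw [hsk, hM, hpowsplit]
      have hc2 : (0:ℝ) < (k : ℝ) ^ 2 * y ^ k * (Nat.factorial N : ℝ) := by positivity
      have hkne : ((k : ℝ)) ≠ 0 := hkR.ne'
      calc ct (D - 1) * (y ^ k * y ^ (wm + 1)) / (Nat.factorial (N + k) : ℝ)
          ≤ ct (D - 1) * (y ^ k * y ^ (wm + 1)) / ((k : ℝ) ^ 2 * y ^ k * (Nat.factorial N : ℝ)) := by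
            apply div_le_div_of_nonneg_left _ hc2 hkey
            exact mul_nonneg (hctpos _).le (by positivity)
          _ = ct (D - 1) * y ^ (wm + 1) / (Nat.factorial N : ℝ) * (1 / (k : ℝ) ^ 2) := by
            have hNf : ((Nat.factorial N : ℝ)) ≠ 0 := by positivity
            have hyk : (y : ℝ) ^ k ≠ 0 := by positivity
            field_simp
  -- summation of s
  have hfun : s = fun n : ℕ => (if n = 0 then (1:ℝ) else 0) + 1 / (n : ℝ) ^ 2 := by
    funext n
    rcases n with _ | n
    · simp [hs]
    · simp [hs]
  have hsSum : HasSum s (1 + Real.pi ^ 2 / 6) := by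
    rw [hfun]
    exact (hasSum_ite_eq 0 1).add hasSum_zeta_two
  have hgSum : HasSum (fun k => M * s k) (M * (1 + Real.pi ^ 2 / 6)) := hsSum.mul_left M
  have hfSummable : Summable (fun k : ℕ =>
      |(-1 : ℝ) ^ (k + wm) * c (k + wm) * y ^ (k + wm + 1) / (Nat.factorial (k + wm + 1) : ℝ)|) :=
    Summable.of_nonneg_of_le (fun k => abs_nonneg _) hterm hgSum.summable
  refine ⟨hfSummable, ?_⟩
  have hsummable2 : Summable (fun k : ℕ =>
      (-1 : ℝ) ^ (k + wm) * c (k + wm) * y ^ (k + wm + 1) / (Nat.factorial (k + wm + 1) : ℝ)) :=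
    hfSummable.of_abs
  have h1 : |∑' w : ℕ, (-1 : ℝ) ^ (w + wm) * c (w + wm) * y ^ (w + wm + 1) / (Nat.factorial (w + wm + 1) : ℝ)|
      ≤ ∑' w : ℕ, |(-1 : ℝ) ^ (w + wm) * c (w + wm) * y ^ (w + wm + 1) / (Nat.factorial (w + wm + 1) : ℝ)| := by
    have := norm_tsum_le_tsum_norm (f := fun w : ℕ =>
      (-1 : ℝ) ^ (w + wm) * c (w + wm) * y ^ (w + wm + 1) / (Nat.factorial (w + wm + 1) : ℝ))
      (by simpa only [Real.norm_eq_abs] using hfSummable)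
    simpa only [Real.norm_eq_abs] using this
  have h2 : (∑' w : ℕ, |(-1 : ℝ) ^ (w + wm) * c (w + wm) * y ^ (w + wm + 1) / (Nat.factorial (w + wm + 1) : ℝ)|)
      ≤ M * (1 + Real.pi ^ 2 / 6) := by
    calc _ ≤ ∑' k : ℕ, M * s k := Summable.tsum_le_tsum hterm hfSummable hgSum.summable
      _ = M * (1 + Real.pi ^ 2 / 6) := hgSum.tsum_eq
  have hfinal : M * (1 + Real.pi ^ 2 / 6)
      = ct (D - 1) * (1 + Real.pi ^ 2 / 6) * y ^ (wm + 1) / (Nat.factorial (wm + 1 - D) : ℝ) := by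
    rw [hM, hN]; ring
  linarith
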